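/- Let S be a set, G a commutative monoid, d ≥ 0, and φ : {a : Finset S | a.card ≤ d} → G any function. Define P : Finset S → G by P(n) = Σ_{a ⊆ n, |a| ≤ d} φ(a). Then P is a polynomial mapping of degree ≤ d: for every finite m ⊆ S there exists a mapping D_m P : Finset (S \ m) → G of degree ≤ d−1 such that P(n ∪ m) = P(n) + (D_m P)(n) for all finite n ⊆ S with n ∩ m = ∅. -/
import Mathlib


/-- `PolyOn d P U` : `P` is a polynomial mapping of degree `≤ d` on the ground set `U ⊆ S`.
Degree `≤ 0` means constant; degree `≤ d+1` means that for every finite `m ⊆ U` there is a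
polynomial mapping `D_m P` of degree `≤ d` on `U \ m` with
`P(n ∪ m) = P(n) + (D_m P)(n)` for all finite `n ⊆ U` disjoint from `m`. -/
def PolyOn {S : Type*} [DecidableEq S] {G : Type*} [AddCommMonoid G] :
    ℕ → (Finset S → G) → Set S → Prop
  | 0, P, U => ∀ n m : Finset S, ↑n ⊆ U → ↑m ⊆ U → P n = P m
  | d + 1, P, U => ∀ m : Finset S, ↑m ⊆ U →
      ∃ Q : Finset S → G, PolyOn d Q (U \ ↑m) ∧
        ∀ n : Finset S, ↑n ⊆ U → Disjoint n m → P (n ∪ m) = P n + Q n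

theorem aux_poly {S : Type*} [DecidableEq S] {G : Type*} [AddCommMonoid G] :
    ∀ (d : ℕ) (φ P : Finset S → G),
    (∀ n : Finset S, P n = ∑ a ∈ n.powerset.filter (fun a => a.card ≤ d), φ a) →
    ∀ U : Set S, PolyOn d P U := by
  intro d
  induction d with
  | zero =>
    intro φ P hP U n m _ _
    rw [hP, hP]
    have h : ∀ k : Finset S, k.powerset.filter (fun a => a.card ≤ 0) = {∅} := by
      intro k
      ext a
      simp [Nat.le_zero, Finset.card_eq_zero]
      rintro rfl; exact k.empty_subset
    rw [h, h]
  | succ d ih =>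
    intro φ P hP U m _
    set ψ : Finset S → G := fun b =>
      ∑ c ∈ m.powerset.filter (fun c => c.Nonempty ∧ b.card + c.card ≤ d + 1), φ (b ∪ c) with hψ
    refine ⟨fun n => ∑ b ∈ n.powerset.filter (fun b => b.card ≤ d), ψ b,
      ih ψ _ (fun n => rfl) _, ?_⟩
    intro n _ hdisj
    rw [hP, hP]
    rw [← Finset.sum_filter_add_sum_filter_not
      ((n ∪ m).powerset.filter (fun a => a.card ≤ d + 1)) (fun a => a ⊆ n)]
    congr 1
    · apply Finset.sum_congr _ (fun _ _ => rfl)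
      ext a
      simp only [Finset.mem_filter, Finset.mem_powerset]
      constructor
      · rintro ⟨⟨_, hc⟩, hs⟩; exact ⟨hs, hc⟩
      · rintro ⟨hs, hc⟩; exact ⟨⟨hs.trans Finset.subset_union_left, hc⟩, hs⟩
    · simp only [hψ]
      rw [Finset.sum_sigma']
      apply Finset.sum_nbij' (i := fun a => ⟨a ∩ n, a ∩ m⟩)
        (j := fun p => p.1 ∪ p.2)
      · intro a ha
        simp only [Finset.mem_filter, Finset.mem_powerset] at ha
        obtain ⟨⟨hsub, hcard⟩, hnot⟩ := ha
        have hdis : Disjoint (a ∩ n) (a ∩ m) :=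
          hdisj.mono Finset.inter_subset_right Finset.inter_subset_right
        have hne : (a ∩ m).Nonempty := by
          rw [Finset.nonempty_iff_ne_empty]
          intro h
          apply hnot
          intro x hx
          rcases Finset.mem_union.1 (hsub hx) with h' | h'
          · exact h'
          · exact absurd (Finset.mem_inter.2 ⟨hx, h'⟩) (by simp [h])
        have hcards : (a ∩ n).card + (a ∩ m).card = a.card := by
          rw [← Finset.card_union_of_disjoint hdis, ← Finset.inter_union_distrib_left,
            Finset.inter_eq_left.2 hsub]
        simp only [Finset.mem_sigma, Finset.mem_filter, Finset.mem_powerset]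
        refine ⟨⟨Finset.inter_subset_right, ?_⟩, Finset.inter_subset_right, hne, by omega⟩
        have := hne.card_pos
        omega
      · intro p hp
        simp only [Finset.mem_sigma, Finset.mem_filter, Finset.mem_powerset] at hp
        obtain ⟨⟨hbn, hbc⟩, hcm, hcne, hsum⟩ := hp
        have hdis' : Disjoint p.1 p.2 := hdisj.mono hbn hcm
        simp only [Finset.mem_filter, Finset.mem_powerset]
        refine ⟨⟨Finset.union_subset_union hbn hcm, ?_⟩, ?_⟩
        · rw [Finset.card_union_of_disjoint hdis']; omega
        · intro h
          obtain ⟨x, hx⟩ := hcne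
          exact (Finset.disjoint_left.1 hdisj) (h (Finset.mem_union_right _ hx)) (hcm hx)
      · intro a ha
        simp only [Finset.mem_filter, Finset.mem_powerset] at ha
        rw [← Finset.inter_union_distrib_left, Finset.inter_eq_left.2 ha.1.1]
      · intro p hp
        simp only [Finset.mem_sigma, Finset.mem_filter, Finset.mem_powerset] at hp
        obtain ⟨⟨hbn, _⟩, hcm, _, _⟩ := hp
        have hd := Finset.disjoint_left.1 hdisj
        have h1 : (p.1 ∪ p.2) ∩ n = p.1 := by
          ext x
          simp only [Finset.mem_inter, Finset.mem_union]
          constructor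
          · rintro ⟨h | h, hn⟩
            · exact h
            · exact absurd hn (fun hn => hd hn (hcm h))
          · exact fun h => ⟨Or.inl h, hbn h⟩
        have h2 : (p.1 ∪ p.2) ∩ m = p.2 := by
          ext x
          simp only [Finset.mem_inter, Finset.mem_union]
          constructor
          · rintro ⟨h | h, hm⟩
            · exact absurd hm (hd (hbn h))
            · exact h
          · exact fun h => ⟨Or.inr h, hcm h⟩
        simp [h1, h2]
      · intro a ha
        simp only [Finset.mem_filter, Finset.mem_powerset] at ha
        rw [← Finset.inter_union_distrib_left, Finset.inter_eq_left.2 ha.1.1]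


/-- The mapping `P(n) = Σ_{a ⊆ n, |a| ≤ d} φ(a)` is a polynomial mapping of degree `≤ d`. -/
theorem sum_over_small_subsets_isPoly {S : Type*} [DecidableEq S] {G : Type*} [AddCommMonoid G]
    (d : ℕ) (φ : Finset S → G) (P : Finset S → G)
    (hP : ∀ n : Finset S, P n = ∑ a ∈ n.powerset.filter (fun a => a.card ≤ d), φ a) :
    PolyOn d P Set.univ := by
  exact aux_poly d φ P hP _
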